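/- For every real x > 0 with x ≠ 1 and every real p with 0 < p ≤ 1/2, the chain of inequalities K(x)^{-p(1-p)}·W_p(x,1) ≤ Ĝ_p(x,1) ≤ L(x,1) ≤ Â_p(x,1) ≤ W_p(x,1) holds. -/

import Mathlib

open Real Set Filter Topology


lemma sinh_le_mul_cosh {t : ℝ} (ht : 0 ≤ t) : Real.sinh t ≤ t * Real.cosh t := by
  have H : MonotoneOn (fun u : ℝ => u * Real.cosh u - Real.sinh u) (Set.Ici 0) := by
    apply monotoneOn_of_deriv_nonneg (convex_Ici 0)
    · fun_prop
    · intro u _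
      exact (((differentiableAt_id).mul (Real.differentiable_cosh u)).sub
        (Real.differentiable_sinh u)).differentiableWithinAt
    · intro u hu
      rw [interior_Ici] at hu
      have hd : HasDerivAt (fun u : ℝ => u * Real.cosh u - Real.sinh u)
          (u * Real.sinh u) u := by
        have := ((hasDerivAt_id u).mul (Real.hasDerivAt_cosh u)).sub (Real.hasDerivAt_sinh u)
        refine this.congr_deriv ?_
        simp [id]
      rw [hd.deriv]
      have hu' := Set.mem_Ioi.mp hu
      exact mul_nonneg hu'.le (Real.sinh_nonneg_iff.2 hu'.le)
  have h0 := H (Set.self_mem_Ici) (Set.mem_Ici.2 ht) ht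
  simpa using h0

lemma mul_sinh_le_mul_sinh {a b : ℝ} (ha : 0 ≤ a) (hab : a ≤ b) :
    b * Real.sinh a ≤ a * Real.sinh b := by
  have H : MonotoneOn (fun v : ℝ => a * Real.sinh v - v * Real.sinh a) (Set.Ici a) := by
    apply monotoneOn_of_deriv_nonneg (convex_Ici a)
    · fun_prop
    · intro u _
      exact (((Real.differentiable_sinh u).const_mul a).sub
        ((differentiableAt_id).mul_const _)).differentiableWithinAt
    · intro u hu
      rw [interior_Ici] at hu
      have hd : HasDerivAt (fun v : ℝ => a * Real.sinh v - v * Real.sinh a)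
          (a * Real.cosh u - Real.sinh a) u := by
        have := ((Real.hasDerivAt_sinh u).const_mul a).sub
          ((hasDerivAt_id u).mul_const (Real.sinh a))
        refine this.congr_deriv ?_
        ring
      rw [hd.deriv, sub_nonneg]
      calc Real.sinh a ≤ a * Real.cosh a := sinh_le_mul_cosh ha
        _ ≤ a * Real.cosh u := by
            apply mul_le_mul_of_nonneg_left _ ha
            have hu' := (Set.mem_Ioi.mp hu).le
            exact Real.cosh_le_cosh.2 (by rw [abs_of_nonneg ha, abs_of_nonneg (ha.trans hu')]; exact hu')
  have h0 := H (Set.self_mem_Ici) (Set.mem_Ici.2 hab) hab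
  simp only [sub_nonneg] at h0
  nlinarith [h0]


lemma keyP (p q t : ℝ) (hp0 : 0 < p) (hp1 : p ≤ 1/2) (hq : q = 1 - p) (ht : 0 < t) :
    0 ≤ 2*p*q * Real.sinh t ^ 2 * Real.sinh (q*t) + q * Real.cosh t * Real.cosh (q*t) * Real.sinh t
      - Real.cosh t ^ 2 * Real.sinh (q*t) := by
  subst hq
  have hq0 : (0:ℝ) < 1 - p := by linarith
  have hqt : 0 ≤ (1-p) * t := by positivity
  have hid : 4 * (2*p*(1-p) * Real.sinh t ^ 2 * Real.sinh ((1-p)*t)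
        + (1-p) * Real.cosh t * Real.cosh ((1-p)*t) * Real.sinh t
        - Real.cosh t ^ 2 * Real.sinh ((1-p)*t))
      = p*((1-p)-p) * Real.sinh ((2+(1-p))*t) + ((1-p)+1-2*p*(1-p)) * Real.sinh ((2-(1-p))*t)
        - 2*(1+2*p*(1-p)) * Real.sinh ((1-p)*t) := by
    have e1 : (2+(1-p))*t = t + t + (1-p)*t := by ring
    have e2 : (2-(1-p))*t = t + t + -((1-p)*t) := by ring
    simp only [Real.sinh_eq, Real.cosh_eq, e1, e2, Real.exp_add, Real.exp_neg]
    have h1 := Real.exp_ne_zero t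
    have h2 := Real.exp_ne_zero ((1-p)*t)
    field_simp
    ring
  have h1 := mul_sinh_le_mul_sinh hqt (by nlinarith : (1-p)*t ≤ (2+(1-p))*t)
  have h2 := mul_sinh_le_mul_sinh hqt (by nlinarith : (1-p)*t ≤ (2-(1-p))*t)
  have h1' : (2+(1-p)) * Real.sinh ((1-p)*t) ≤ (1-p) * Real.sinh ((2+(1-p))*t) :=
    (mul_le_mul_iff_right₀ ht).mp (by nlinarith [h1])
  have h2' : (2-(1-p)) * Real.sinh ((1-p)*t) ≤ (1-p) * Real.sinh ((2-(1-p))*t) :=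
    (mul_le_mul_iff_right₀ ht).mp (by nlinarith [h2])
  have hc1 : 0 ≤ p*((1-p)-p) := by nlinarith
  have hc2 : 0 ≤ (1-p)+1-2*p*(1-p) := by nlinarith
  have hs1 := mul_le_mul_of_nonneg_left h1' hc1
  have hs2 := mul_le_mul_of_nonneg_left h2' hc2
  have hsum : (1-p) * (2*(1+2*p*(1-p)) * Real.sinh ((1-p)*t))
      ≤ (1-p) * (p*((1-p)-p) * Real.sinh ((2+(1-p))*t)
          + ((1-p)+1-2*p*(1-p)) * Real.sinh ((2-(1-p))*t)) := by
    nlinarith [hs1, hs2]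
  have hfin := (mul_le_mul_iff_right₀ hq0).mp hsum
  linarith [hid, hfin]

lemma key_sinh (p q s : ℝ) (hp0 : 0 < p) (hp1 : p ≤ 1/2) (hq : q = 1 - p) (hs : 0 < s) :
    q * Real.sinh s ≤ Real.cosh s ^ (2*p*q) * Real.sinh (q*s) := by
  have hq0 : 0 < q := by rw [hq]; linarith
  set c : ℝ := 2*p*q with hc
  set G : ℝ → ℝ := fun t => Real.cosh t ^ c * (Real.sinh (q*t) / Real.sinh t) with hG
  -- derivative of G at t > 0
  have hderiv : ∀ t : ℝ, 0 < t → HasDerivAt G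
      (c * Real.cosh t ^ (c-1) * Real.sinh t * (Real.sinh (q*t) / Real.sinh t)
        + Real.cosh t ^ c * ((q * Real.cosh (q*t) * Real.sinh t
            - Real.sinh (q*t) * Real.cosh t) / Real.sinh t ^ 2)) t := by
    intro t ht
    have hst : Real.sinh t ≠ 0 := ne_of_gt (by rwa [Real.sinh_pos_iff])
    have h1 : HasDerivAt (fun u : ℝ => Real.cosh u ^ c)
        (c * Real.cosh t ^ (c-1) * Real.sinh t) t := by
      have := (Real.hasDerivAt_cosh t).rpow_const (p := c) (Or.inl (ne_of_gt (Real.cosh_pos t)))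
      convert this using 1
      ring
    have h2 : HasDerivAt (fun u : ℝ => Real.sinh (q*u)) (q * Real.cosh (q*t)) t := by
      have := ((hasDerivAt_id t).const_mul q).sinh
      refine this.congr_deriv ?_
      simp [id, mul_comm]
    have h3 := Real.hasDerivAt_sinh t
    have h4 := h2.div h3 hst
    exact h1.mul h4
  -- derivative nonneg
  have hderiv_nonneg : ∀ t : ℝ, 0 < t →
      0 ≤ c * Real.cosh t ^ (c-1) * Real.sinh t * (Real.sinh (q*t) / Real.sinh t)
        + Real.cosh t ^ c * ((q * Real.cosh (q*t) * Real.sinh t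
            - Real.sinh (q*t) * Real.cosh t) / Real.sinh t ^ 2) := by
    intro t ht
    have hst : (0:ℝ) < Real.sinh t := by rwa [Real.sinh_pos_iff]
    have hch : (0:ℝ) < Real.cosh t := Real.cosh_pos t
    have hsplit : Real.cosh t ^ c = Real.cosh t ^ (c-1) * Real.cosh t := by
      rw [← Real.rpow_add_one (ne_of_gt hch)]
      norm_num
    have hP := keyP p q t hp0 hp1 hq ht
    have hpow : (0:ℝ) < Real.cosh t ^ (c-1) := Real.rpow_pos_of_pos hch _
    have key : c * Real.cosh t ^ (c-1) * Real.sinh t * (Real.sinh (q*t) / Real.sinh t)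
        + Real.cosh t ^ c * ((q * Real.cosh (q*t) * Real.sinh t
            - Real.sinh (q*t) * Real.cosh t) / Real.sinh t ^ 2)
        = Real.cosh t ^ (c-1) / Real.sinh t ^ 2 *
          (c * Real.sinh t ^ 2 * Real.sinh (q*t) + q * Real.cosh t * Real.cosh (q*t) * Real.sinh t
            - Real.cosh t ^ 2 * Real.sinh (q*t)) := by
      rw [hsplit]
      field_simp
      ring
    rw [key, hc]
    have : (0:ℝ) ≤ Real.cosh t ^ (c-1) / Real.sinh t ^ 2 := by positivity
    rw [← hc]
    exact mul_nonneg this (by rw [hc]; exact hP)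
  -- G monotone on Ioi 0
  have hmono : MonotoneOn G (Set.Ioi (0:ℝ)) := by
    apply monotoneOn_of_deriv_nonneg (convex_Ioi 0)
    · intro t ht
      exact (hderiv t ht).continuousAt.continuousWithinAt
    · intro t ht
      rw [interior_Ioi] at ht
      exact (hderiv t ht).differentiableAt.differentiableWithinAt
    · intro t ht
      rw [interior_Ioi] at ht
      rw [(hderiv t ht).deriv]
      exact hderiv_nonneg t ht
  -- limit of G at 0⁺ is q
  have hlim : Tendsto G (nhdsWithin 0 (Set.Ioi 0)) (nhds q) := by
    have T1 : Tendsto (fun t : ℝ => Real.cosh t ^ c) (nhdsWithin 0 (Set.Ioi 0)) (nhds 1) := by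
      have hcont : Continuous (fun t : ℝ => Real.cosh t ^ c) :=
        Real.continuous_cosh.rpow_const (fun t => Or.inl (ne_of_gt (Real.cosh_pos t)))
      have := hcont.continuousAt (x := 0)
      have h0 : Real.cosh (0:ℝ) ^ c = 1 := by simp
      rw [ContinuousAt, h0] at this
      exact this.mono_left nhdsWithin_le_nhds
    have hnum : Tendsto (fun t : ℝ => Real.sinh (q*t) / t) (nhdsWithin 0 {0}ᶜ) (nhds q) := by
      have hd : HasDerivAt (fun t : ℝ => Real.sinh (q*t)) q 0 := by
        have := ((hasDerivAt_id (0:ℝ)).const_mul q).sinh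
        refine this.congr_deriv ?_
        simp
      have := hasDerivAt_iff_tendsto_slope.mp hd
      apply this.congr'
      filter_upwards [self_mem_nhdsWithin] with t ht
      simp [slope_fun_def, div_eq_inv_mul]
    have hden : Tendsto (fun t : ℝ => Real.sinh t / t) (nhdsWithin 0 {0}ᶜ) (nhds 1) := by
      have hd : HasDerivAt Real.sinh 1 0 := by
        simpa using Real.hasDerivAt_sinh 0
      have := hasDerivAt_iff_tendsto_slope.mp hd
      apply this.congr'
      filter_upwards [self_mem_nhdsWithin] with t ht
      simp [slope_fun_def, div_eq_inv_mul]
    have T2 : Tendsto (fun t : ℝ => Real.sinh (q*t) / Real.sinh t)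
        (nhdsWithin 0 (Set.Ioi 0)) (nhds q) := by
      have hsub : nhdsWithin (0:ℝ) (Set.Ioi 0) ≤ nhdsWithin 0 {0}ᶜ :=
        nhdsWithin_mono 0 (fun x hx => ne_of_gt hx)
      have := ((hnum.div hden one_ne_zero).mono_left hsub)
      simp only [div_one] at this
      apply this.congr'
      filter_upwards [self_mem_nhdsWithin] with t ht
      have ht0 : t ≠ 0 := ne_of_gt ht
      have hst : Real.sinh t ≠ 0 := ne_of_gt (Real.sinh_pos_iff.2 ht)
      rw [Pi.div_apply]
      field_simp
    have := T1.mul T2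
    rw [one_mul] at this
    exact this
  -- conclude
  have hGs : q ≤ G s := by
    apply le_of_tendsto hlim
    filter_upwards [Ioc_mem_nhdsGT_of_mem ⟨le_refl (0:ℝ), hs⟩] with t ht
    exact hmono ht.1 hs ht.2
  have hsinh : (0:ℝ) < Real.sinh s := by rwa [Real.sinh_pos_iff]
  rw [hG] at hGs
  simp only [] at hGs
  rw [mul_div_assoc'] at hGs
  calc q * Real.sinh s ≤ (Real.cosh s ^ c * Real.sinh (q*s) / Real.sinh s) * Real.sinh s := by
        exact mul_le_mul_of_nonneg_right hGs hsinh.le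
    _ = Real.cosh s ^ c * Real.sinh (q*s) := by field_simp

lemma cosh_mul_sinh_le (p s : ℝ) (hp0 : 0 < p) (hp1 : p ≤ 1/2) (hs : 0 < s) :
    Real.cosh (p*s) * Real.sinh ((1-p)*s) ≤ (1-p) * Real.sinh s := by
  have h3 := mul_sinh_le_mul_sinh (a := (1-2*p)*s) (b := s) (by nlinarith) (by nlinarith)
  have h3' : Real.sinh ((1-2*p)*s) ≤ (1-2*p) * Real.sinh s :=
    (mul_le_mul_iff_right₀ hs).mp (by nlinarith [h3])
  have hid2 : (1-p)*Real.sinh s - Real.cosh (p*s) * Real.sinh ((1-p)*s)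
      = ((1-2*p)*Real.sinh s - Real.sinh ((1-2*p)*s))/2 := by
    have n1 := Real.exp_ne_zero (p*s)
    have n2 := Real.exp_ne_zero ((1-p)*s)
    have h1 : Real.exp s = Real.exp (p*s) * Real.exp ((1-p)*s) := by
      rw [← Real.exp_add]; ring_nf
    have h2 : Real.exp (-s) = (Real.exp (p*s) * Real.exp ((1-p)*s))⁻¹ := by
      rw [Real.exp_neg, h1]
    have h3 : Real.exp ((1-2*p)*s) = Real.exp ((1-p)*s) * (Real.exp (p*s))⁻¹ := by
      rw [show (1-2*p)*s = (1-p)*s + -(p*s) by ring, Real.exp_add, Real.exp_neg]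
    have h4 : Real.exp (-((1-2*p)*s)) = Real.exp (p*s) * (Real.exp ((1-p)*s))⁻¹ := by
      rw [show -((1-2*p)*s) = p*s + -((1-p)*s) by ring, Real.exp_add, Real.exp_neg]
    have h5 : Real.exp (-(p*s)) = (Real.exp (p*s))⁻¹ := Real.exp_neg _
    have h6 : Real.exp (-((1-p)*s)) = (Real.exp ((1-p)*s))⁻¹ := Real.exp_neg _
    simp only [Real.sinh_eq, Real.cosh_eq, h1, h2, h3, h4, h5, h6]
    field_simp
    ring
  linarith [hid2, h3']

lemma main_gt (x p : ℝ) (hx : 1 < x) (hp0 : 0 < p) (hp1 : p ≤ 1 / 2) :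
    ((x + 1) ^ 2 / (4 * x)) ^ (-(p * (1 - p))) *
        (p * (1 - p) * (x - 1) ^ 2 / ((x ^ p - 1) * (x ^ (1 - p) - 1))) ≤
      p * x ^ (p / 2) * (x - 1) / (x ^ p - 1) ∧
    p * x ^ (p / 2) * (x - 1) / (x ^ p - 1) ≤ (x - 1) / Real.log x ∧
    (x - 1) / Real.log x ≤ p * (x ^ p + 1) * (x - 1) / (2 * (x ^ p - 1)) ∧
    p * (x ^ p + 1) * (x - 1) / (2 * (x ^ p - 1)) ≤
      p * (1 - p) * (x - 1) ^ 2 / ((x ^ p - 1) * (x ^ (1 - p) - 1)) := by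
  have hx0 : (0:ℝ) < x := by linarith
  set s : ℝ := Real.log x / 2 with hsdef
  have hs0 : 0 < s := by
    have := Real.log_pos hx
    rw [hsdef]; linarith
  have hlog : Real.log x = 2 * s := by rw [hsdef]; ring
  have sinh2 : ∀ t : ℝ, Real.exp (2*t) - 1 = 2 * Real.exp t * Real.sinh t := by
    intro t
    have h2t : Real.exp (2*t) = Real.exp t * Real.exp t := by rw [← Real.exp_add]; ring_nf
    rw [Real.sinh_eq, Real.exp_neg, h2t]
    have := Real.exp_ne_zero t
    field_simp
  have cosh2 : ∀ t : ℝ, Real.exp (2*t) + 1 = 2 * Real.exp t * Real.cosh t := by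
    intro t
    have h2t : Real.exp (2*t) = Real.exp t * Real.exp t := by rw [← Real.exp_add]; ring_nf
    rw [Real.cosh_eq, Real.exp_neg, h2t]
    have := Real.exp_ne_zero t
    field_simp
  have hxe : x = Real.exp (2*s) := by
    rw [hsdef, show 2*(Real.log x/2) = Real.log x by ring, Real.exp_log hx0]
  have hxp : x ^ p = Real.exp (2*(p*s)) := by
    rw [Real.rpow_def_of_pos hx0, hlog]; ring_nf
  have hxq : x ^ (1-p) = Real.exp (2*((1-p)*s)) := by
    rw [Real.rpow_def_of_pos hx0, hlog]; ring_nf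
  have hxhalf : x ^ (p/2) = Real.exp (p*s) := by
    rw [Real.rpow_def_of_pos hx0, hlog]; ring_nf
  have hb : x - 1 = 2 * Real.exp s * Real.sinh s := by rw [hxe]; exact sinh2 s
  have hp' : x ^ p - 1 = 2 * Real.exp (p*s) * Real.sinh (p*s) := by rw [hxp]; exact sinh2 _
  have hq' : x ^ (1-p) - 1 = 2 * Real.exp ((1-p)*s) * Real.sinh ((1-p)*s) := by
    rw [hxq]; exact sinh2 _
  have hp1' : x ^ p + 1 = 2 * Real.exp (p*s) * Real.cosh (p*s) := by rw [hxp]; exact cosh2 _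
  have hK : (x + 1) ^ 2 / (4 * x) = Real.cosh s ^ (2:ℕ) := by
    rw [hxe, cosh2 s]
    have h2t : Real.exp (2*s) = Real.exp s * Real.exp s := by rw [← Real.exp_add]; ring_nf
    rw [h2t]
    have := Real.exp_ne_zero s
    field_simp
    ring
  have hKpow : ((x + 1) ^ 2 / (4 * x)) ^ (-(p * (1 - p)))
      = Real.cosh s ^ (-(2*p*(1-p))) := by
    rw [hK, ← Real.rpow_natCast (Real.cosh s) 2, ← Real.rpow_mul (Real.cosh_pos s).le]
    norm_num
    ring_nf
  -- positivity facts
  have hE : (0:ℝ) < Real.exp s := Real.exp_pos s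
  have hB : (0:ℝ) < Real.exp (p*s) := Real.exp_pos _
  have hC : (0:ℝ) < Real.exp ((1-p)*s) := Real.exp_pos _
  have hSh : (0:ℝ) < Real.sinh s := by rwa [Real.sinh_pos_iff]
  have hSp : (0:ℝ) < Real.sinh (p*s) := by rw [Real.sinh_pos_iff]; positivity
  have hq0 : (0:ℝ) < 1 - p := by linarith
  have hSq : (0:ℝ) < Real.sinh ((1-p)*s) := by rw [Real.sinh_pos_iff]; positivity
  have hCp : (0:ℝ) < Real.cosh (p*s) := Real.cosh_pos _
  have hBC : Real.exp (p*s) * Real.exp ((1-p)*s) = Real.exp s := by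
    rw [← Real.exp_add]; ring_nf
  set K2 : ℝ := Real.cosh s ^ (2*p*(1-p)) with hK2def
  have hK2 : 0 < K2 := Real.rpow_pos_of_pos (Real.cosh_pos s) _
  have key := key_sinh p (1-p) s hp0 hp1 rfl hs0
  rw [hKpow, hp', hq', hp1', hb, hxhalf, hlog]
  have hKneg : Real.cosh s ^ (-(2*p*(1-p))) = K2⁻¹ := by
    rw [hK2def, ← Real.rpow_neg (Real.cosh_pos s).le]
  rw [hKneg]
  set F : ℝ := p * Real.exp s * Real.sinh s / Real.sinh (p*s) with hFdef
  have hF : 0 < F := by rw [hFdef]; positivity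
  refine ⟨?_, ?_, ?_, ?_⟩
  · -- goal 1
    have hE1 : K2⁻¹ * (p * (1-p) * (2 * Real.exp s * Real.sinh s) ^ 2 /
        ((2 * Real.exp (p*s) * Real.sinh (p*s)) * (2 * Real.exp ((1-p)*s) * Real.sinh ((1-p)*s))))
        = F * ((1-p) * Real.sinh s / (K2 * Real.sinh ((1-p)*s))) := by
      rw [hFdef, ← hBC]
      field_simp
    have hE2 : p * Real.exp (p*s) * (2 * Real.exp s * Real.sinh s) /
        (2 * Real.exp (p*s) * Real.sinh (p*s)) = F := by
      rw [hFdef]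
      field_simp
    rw [hE1, hE2]
    have hr : (1-p) * Real.sinh s / (K2 * Real.sinh ((1-p)*s)) ≤ 1 := by
      rw [div_le_one (by positivity)]
      rw [hK2def, mul_assoc] at *
      exact key
    calc F * ((1-p) * Real.sinh s / (K2 * Real.sinh ((1-p)*s))) ≤ F * 1 :=
          mul_le_mul_of_nonneg_left hr hF.le
      _ = F := mul_one F
  · have hE2 : p * Real.exp (p*s) * (2 * Real.exp s * Real.sinh s) /
        (2 * Real.exp (p*s) * Real.sinh (p*s)) = F := by
      rw [hFdef]
      field_simp
    rw [hE2, hFdef]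
    have hps : p*s ≤ Real.sinh (p*s) := Real.self_le_sinh_iff.mpr (by positivity)
    rw [div_le_div_iff₀ hSp (by positivity : (0:ℝ) < 2*s)]
    nlinarith [mul_le_mul_of_nonneg_left hps
      (by positivity : (0:ℝ) ≤ 2 * Real.exp s * Real.sinh s)]
  · have hcl2 : Real.sinh (p*s) ≤ p*s * Real.cosh (p*s) := sinh_le_mul_cosh (by positivity)
    rw [div_le_div_iff₀ (by positivity : (0:ℝ) < 2*s)
      (by positivity : (0:ℝ) < 2 * (2 * Real.exp (p*s) * Real.sinh (p*s)))]
    linarith [mul_le_mul_of_nonneg_left hcl2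
      (by positivity : (0:ℝ) ≤ 4 * Real.exp (p*s) * Real.exp s * Real.sinh s)]
  · have hcl5 := cosh_mul_sinh_le p s hp0 hp1 hs0
    rw [← hBC]
    rw [div_le_div_iff₀
      (by positivity : (0:ℝ) < 2 * (2 * Real.exp (p*s) * Real.sinh (p*s)))
      (by positivity : (0:ℝ) < 2 * Real.exp (p*s) * Real.sinh (p*s) *
        (2 * Real.exp ((1-p)*s) * Real.sinh ((1-p)*s)))]
    linarith [mul_le_mul_of_nonneg_left hcl5
      (by positivity : (0:ℝ) ≤ 16 * p * Real.exp (p*s) ^ 3 * Real.exp ((1-p)*s) ^ 2 *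
        Real.sinh s * Real.sinh (p*s))]

theorem chain_of_log_mean_bounds (x p : ℝ) (hx : 0 < x) (hx1 : x ≠ 1)
    (hp0 : 0 < p) (hp1 : p ≤ 1 / 2) :
    ((x + 1) ^ 2 / (4 * x)) ^ (-(p * (1 - p))) *
        (p * (1 - p) * (x - 1) ^ 2 / ((x ^ p - 1) * (x ^ (1 - p) - 1))) ≤
      p * x ^ (p / 2) * (x - 1) / (x ^ p - 1) ∧
    p * x ^ (p / 2) * (x - 1) / (x ^ p - 1) ≤ (x - 1) / Real.log x ∧
    (x - 1) / Real.log x ≤ p * (x ^ p + 1) * (x - 1) / (2 * (x ^ p - 1)) ∧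
    p * (x ^ p + 1) * (x - 1) / (2 * (x ^ p - 1)) ≤
      p * (1 - p) * (x - 1) ^ 2 / ((x ^ p - 1) * (x ^ (1 - p) - 1)) := by
  rcases lt_or_gt_of_ne hx1 with hlt | hgt
  · -- x < 1 : apply main_gt to x⁻¹
    have hy : 1 < x⁻¹ := (one_lt_inv₀ hx).mpr hlt
    obtain ⟨h1, h2, h3, h4⟩ := main_gt x⁻¹ p hy hp0 hp1
    have hx0' : x ≠ 0 := ne_of_gt hx
    have hxp0 : (0:ℝ) < x ^ p := Real.rpow_pos_of_pos hx p
    have hxh0 : (0:ℝ) < x ^ (p/2) := Real.rpow_pos_of_pos hx _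
    have hxq0 : (0:ℝ) < x ^ (1-p) := Real.rpow_pos_of_pos hx _
    have hxp_lt : x ^ p < 1 := Real.rpow_lt_one hx.le hlt hp0
    have hxq_lt : x ^ (1-p) < 1 := Real.rpow_lt_one hx.le hlt (by linarith)
    have hxp_ne : x ^ p - 1 ≠ 0 := by nlinarith
    have hxq_ne : x ^ (1-p) - 1 ≠ 0 := by nlinarith
    have hxltp : x < x ^ p := by
      have := Real.rpow_lt_rpow_of_exponent_gt hx hlt (by linarith : p < 1)
      rwa [Real.rpow_one] at this
    have hxv : x - x ^ p ≠ 0 := by nlinarith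
    have hlogne : Real.log x ≠ 0 := Real.log_ne_zero_of_pos_of_ne_one hx hx1
    have hip : x⁻¹ ^ p = (x ^ p)⁻¹ := Real.inv_rpow hx.le p
    have hiq : x⁻¹ ^ (1-p) = (x ^ (1-p))⁻¹ := Real.inv_rpow hx.le _
    have hihalf : x⁻¹ ^ (p/2) = (x ^ (p/2))⁻¹ := Real.inv_rpow hx.le _
    have hsq : x ^ p = x ^ (p/2) * x ^ (p/2) := by
      rw [← Real.rpow_add hx]; ring_nf
    have hqp : x ^ (1-p) = x / x ^ p := by
      rw [eq_div_iff (ne_of_gt hxp0), ← Real.rpow_add hx]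
      norm_num
    have hsq_ne : x ^ (p/2) * x ^ (p/2) - 1 ≠ 0 := by rw [← hsq]; exact hxp_ne
    have hqp_ne : x / x ^ p - 1 ≠ 0 := by rw [← hqp]; exact hxq_ne
    -- conversion equalities
    have EK : ((x⁻¹ + 1) ^ 2 / (4 * x⁻¹)) ^ (-(p * (1 - p)))
        = ((x + 1) ^ 2 / (4 * x)) ^ (-(p * (1 - p))) := by
      congr 1
      field_simp
      ring
    have hipne : (x ^ p)⁻¹ - 1 ≠ 0 := by
      have h := (one_lt_inv₀ hxp0).mpr hxp_lt
      intro hcon; linarith [sub_eq_zero.mp hcon]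
    have hiqne : (x ^ (1-p))⁻¹ - 1 ≠ 0 := by
      have h := (one_lt_inv₀ hxq0).mpr hxq_lt
      intro hcon; linarith [sub_eq_zero.mp hcon]
    have EG : x * (p * x⁻¹ ^ (p/2) * (x⁻¹ - 1) / (x⁻¹ ^ p - 1))
        = p * x ^ (p/2) * (x - 1) / (x ^ p - 1) := by
      rw [hihalf, hip, ← mul_div_assoc, div_eq_div_iff hipne hxp_ne, hsq]
      field_simp
      ring
    have EL : x * ((x⁻¹ - 1) / Real.log x⁻¹) = (x - 1) / Real.log x := by
      rw [Real.log_inv]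
      field_simp
      ring
    have EA : x * (p * (x⁻¹ ^ p + 1) * (x⁻¹ - 1) / (2 * (x⁻¹ ^ p - 1)))
        = p * (x ^ p + 1) * (x - 1) / (2 * (x ^ p - 1)) := by
      rw [hip, ← mul_div_assoc,
        div_eq_div_iff (mul_ne_zero two_ne_zero hipne) (mul_ne_zero two_ne_zero hxp_ne)]
      field_simp
      ring
    have EW : x * (p * (1 - p) * (x⁻¹ - 1) ^ 2 / ((x⁻¹ ^ p - 1) * (x⁻¹ ^ (1 - p) - 1)))
        = p * (1 - p) * (x - 1) ^ 2 / ((x ^ p - 1) * (x ^ (1 - p) - 1)) := by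
      rw [hip, hiq, ← mul_div_assoc,
        div_eq_div_iff (mul_ne_zero hipne hiqne) (mul_ne_zero hxp_ne hxq_ne), hqp]
      field_simp
      ring
    refine ⟨?_, ?_, ?_, ?_⟩
    · calc ((x + 1) ^ 2 / (4 * x)) ^ (-(p * (1 - p))) *
            (p * (1 - p) * (x - 1) ^ 2 / ((x ^ p - 1) * (x ^ (1 - p) - 1)))
          = x * (((x⁻¹ + 1) ^ 2 / (4 * x⁻¹)) ^ (-(p * (1 - p))) *
            (p * (1 - p) * (x⁻¹ - 1) ^ 2 / ((x⁻¹ ^ p - 1) * (x⁻¹ ^ (1 - p) - 1)))) := by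
            rw [EK, ← EW]; ring
        _ ≤ x * (p * x⁻¹ ^ (p/2) * (x⁻¹ - 1) / (x⁻¹ ^ p - 1)) :=
            mul_le_mul_of_nonneg_left h1 hx.le
        _ = p * x ^ (p/2) * (x - 1) / (x ^ p - 1) := EG
    · calc p * x ^ (p/2) * (x - 1) / (x ^ p - 1)
          = x * (p * x⁻¹ ^ (p/2) * (x⁻¹ - 1) / (x⁻¹ ^ p - 1)) := EG.symm
        _ ≤ x * ((x⁻¹ - 1) / Real.log x⁻¹) := mul_le_mul_of_nonneg_left h2 hx.le
        _ = (x - 1) / Real.log x := EL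
    · calc (x - 1) / Real.log x
          = x * ((x⁻¹ - 1) / Real.log x⁻¹) := EL.symm
        _ ≤ x * (p * (x⁻¹ ^ p + 1) * (x⁻¹ - 1) / (2 * (x⁻¹ ^ p - 1))) :=
            mul_le_mul_of_nonneg_left h3 hx.le
        _ = p * (x ^ p + 1) * (x - 1) / (2 * (x ^ p - 1)) := EA
    · calc p * (x ^ p + 1) * (x - 1) / (2 * (x ^ p - 1))
          = x * (p * (x⁻¹ ^ p + 1) * (x⁻¹ - 1) / (2 * (x⁻¹ ^ p - 1))) := EA.symm
        _ ≤ x * (p * (1 - p) * (x⁻¹ - 1) ^ 2 / ((x⁻¹ ^ p - 1) * (x⁻¹ ^ (1 - p) - 1))) :=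
            mul_le_mul_of_nonneg_left h4 hx.le
        _ = p * (1 - p) * (x - 1) ^ 2 / ((x ^ p - 1) * (x ^ (1 - p) - 1)) := EW
  · exact main_gt x p hgt hp0 hp1
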